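/- The class of all finite convexly ordered ultrametric spaces has the Ramsey property: for every integer k ≥ 2 and all finite convexly ordered ultrametric spaces U and V such that U embeds into V, there exists a finite convexly ordered ultrametric space W such that for every k-coloring of the set of embeddings of U into W there exist an embedding w : V ↪ W and a color i such that w ∘ g has color i for every embedding g : U ↪ V. -/

import Mathlib

/-- A finite convexly ordered ultrametric space: a finite set `U` with an ultrametric `dist`
(a metric satisfying `d(x,z) ≤ max (d(x,y)) (d(y,z))`) and a (strict) linear order `lt` such
that every closed ball is convex with respect to `lt`. -/
structure ConvOrdUltra where
  U : Type
  finite : Finite U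
  dist : U → U → ℝ
  dist_self : ∀ x, dist x x = 0
  eq_of_dist_eq_zero : ∀ x y, dist x y = 0 → x = y
  dist_comm : ∀ x y, dist x y = dist y x
  ultra : ∀ x y z, dist x z ≤ max (dist x y) (dist y z)
  lt : U → U → Prop
  lt_irrefl : ∀ x, ¬ lt x x
  lt_trans : ∀ x y z, lt x y → lt y z → lt x z
  lt_total : ∀ x y, lt x y ∨ x = y ∨ lt y x
  convex : ∀ u r x y z, dist u x ≤ r → dist u y ≤ r → lt x z → lt z y → dist u z ≤ r

/-- An embedding of convexly ordered ultrametric spaces: an injective map preserving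
distances and the linear orders. -/
def ConvOrdUltra.Emb (X Y : ConvOrdUltra) (f : X.U → Y.U) : Prop :=
  Function.Injective f ∧
  (∀ a b, Y.dist (f a) (f b) = X.dist a b) ∧
  (∀ a b, X.lt a b → Y.lt (f a) (f b))

namespace CRam

/-- max label over gap interval `[x, y)` -/
def gmax (c : ℕ → ℕ) (x y : ℕ) : ℕ := (Finset.Ico x y).sup c

/-- embedding of the word `(p, a)` (p gaps, points 0..p) into `(n, c)` -/
def WEmb (p : ℕ) (a : ℕ → ℕ) (n : ℕ) (c : ℕ → ℕ) (φ : ℕ → ℕ) : Prop :=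
  φ p ≤ n ∧ (∀ i, i < p → φ i < φ (i + 1)) ∧
    (∀ i, i < p → gmax c (φ i) (φ (i + 1)) = a i)

def Over (m n : ℕ) (c : ℕ → ℕ) : Prop := ∀ i, i < n → c i < m

def Inv (p : ℕ) {k : ℕ} (χ : (ℕ → ℕ) → Fin k) : Prop :=
  ∀ φ φ', (∀ i, i ≤ p → φ i = φ' i) → χ φ = χ φ'

/-- Ramsey target statement for words -/
def RT (m k p : ℕ) (a : ℕ → ℕ) (q : ℕ) (b : ℕ → ℕ) : Prop :=
  ∃ n c, Over m n c ∧ ∀ χ : (ℕ → ℕ) → Fin k, Inv p χ →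
    ∃ ψ, WEmb q b n c ψ ∧ ∃ col : Fin k,
      ∀ g, WEmb p a q b g → χ (fun i => ψ (g i)) = col

/-! ### gmax lemmas -/

lemma gmax_congr {c c' : ℕ → ℕ} {x y : ℕ} (h : ∀ t, x ≤ t → t < y → c t = c' t) :
    gmax c x y = gmax c' x y := by
  unfold gmax
  apply Finset.sup_congr rfl
  intro t ht
  rw [Finset.mem_Ico] at ht
  exact h t ht.1 ht.2

lemma gmax_split {c : ℕ → ℕ} {x y z : ℕ} (h1 : x ≤ y) (h2 : y ≤ z) :
    gmax c x z = max (gmax c x y) (gmax c y z) := by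
  unfold gmax
  rw [← Finset.sup_union, Finset.Ico_union_Ico_eq_Ico h1 h2]

lemma gmax_single (c : ℕ → ℕ) (x : ℕ) : gmax c x (x + 1) = c x := by
  unfold gmax
  rw [Nat.Ico_succ_singleton, Finset.sup_singleton]

lemma gmax_le {c : ℕ → ℕ} {x y L : ℕ} (h : ∀ t, x ≤ t → t < y → c t ≤ L) :
    gmax c x y ≤ L := by
  apply Finset.sup_le
  intro t ht
  rw [Finset.mem_Ico] at ht
  exact h t ht.1 ht.2

lemma le_gmax {c : ℕ → ℕ} {x y t : ℕ} (h1 : x ≤ t) (h2 : t < y) : c t ≤ gmax c x y :=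
  Finset.le_sup (Finset.mem_Ico.2 ⟨h1, h2⟩)

lemma gmax_lt {c : ℕ → ℕ} {x y L : ℕ} (hxy : x < y) (h : ∀ t, x ≤ t → t < y → c t < L) :
    gmax c x y < L := by
  have hL : 0 < L := Nat.pos_of_ne_zero (by
    intro h0
    exact absurd (h x le_rfl hxy) (by omega))
  exact (Finset.sup_lt_iff hL).2 (by
    intro t ht
    rw [Finset.mem_Ico] at ht
    exact h t ht.1 ht.2)

lemma gmax_shift (c : ℕ → ℕ) (s x y : ℕ) :
    gmax c (x + s) (y + s) = gmax (fun t => c (t + s)) x y := by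
  unfold gmax
  have : Finset.Ico (x + s) (y + s) = (Finset.Ico x y).image (· + s) := by
    rw [Finset.image_add_right_Ico]
  rw [this, Finset.sup_image]
  rfl

/-! ### WEmb basic lemmas -/

lemma WEmb.mono {p a n c φ} (h : WEmb p a n c φ) :
    ∀ {i j}, i ≤ j → j ≤ p → φ i ≤ φ j := by
  have key : ∀ d i, i + d ≤ p → φ i ≤ φ (i + d) := by
    intro d
    induction d with
    | zero => intro i _; exact le_rfl
    | succ d ih =>
      intro i hi
      have h1 : φ i ≤ φ (i + d) := ih i (by omega)
      have h2 : φ (i + d) < φ (i + d + 1) := h.2.1 _ (by omega)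
      have e : i + (d + 1) = i + d + 1 := by omega
      rw [e]
      omega
  intro i j hij hj
  have := key (j - i) i (by omega)
  rwa [Nat.add_sub_cancel' hij] at this

lemma WEmb.strictMono {p a n c φ} (h : WEmb p a n c φ) :
    ∀ {i j}, i < j → j ≤ p → φ i < φ j := by
  intro i j hij hj
  have h1 : φ i < φ (i + 1) := h.2.1 _ (by omega)
  have h2 : φ (i + 1) ≤ φ j := h.mono (by omega) hj
  omega

lemma WEmb.le_n {p a n c φ} (h : WEmb p a n c φ) {i} (hi : i ≤ p) : φ i ≤ n :=
  le_trans (h.mono hi le_rfl) h.1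

lemma WEmb.gmax_pairs {p a n c φ} (h : WEmb p a n c φ) :
    ∀ i j, i < j → j ≤ p → gmax c (φ i) (φ j) = gmax a i j := by
  have key : ∀ d i, i + (d + 1) ≤ p → gmax c (φ i) (φ (i + (d + 1))) = gmax a i (i + (d + 1)) := by
    intro d
    induction d with
    | zero =>
      intro i hi
      rw [gmax_single, h.2.2 i (by omega)]
    | succ d ih =>
      intro i hi
      have e1 : φ i ≤ φ (i + (d + 1)) := h.mono (by omega) (by omega)
      have e2 : φ (i + (d + 1)) ≤ φ (i + (d + 1) + 1) := h.mono (by omega) (by omega)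
      have : i + (d + 1 + 1) = (i + (d + 1)) + 1 := by omega
      rw [this, gmax_split e1 e2, ih i (by omega), h.2.2 _ (by omega),
        gmax_split (by omega : i ≤ i + (d + 1)) (by omega : i + (d + 1) ≤ i + (d + 1) + 1),
        gmax_single]
  intro i j hij hj
  have := key (j - i - 1) i (by omega)
  have e : i + (j - i - 1 + 1) = j := by omega
  rwa [e] at this

lemma WEmb.comp {p a q b n c φ ψ} (h1 : WEmb p a q b φ) (h2 : WEmb q b n c ψ) :
    WEmb p a n c (fun i => ψ (φ i)) := by
  refine ⟨h2.le_n h1.1, ?_, ?_⟩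
  · intro i hi
    exact h2.strictMono (h1.2.1 i hi) (h1.le_n (by omega))
  · intro i hi
    rw [h2.gmax_pairs _ _ (h1.2.1 i hi) (h1.le_n (by omega))]
    exact h1.2.2 i hi

lemma wemb_id {p : ℕ} {a : ℕ → ℕ} : WEmb p a p a (fun i => i) :=
  ⟨le_rfl, fun i _ => Nat.lt_succ_self i, fun i _ => gmax_single a i⟩

lemma wemb_congr_c {p a n c c' φ} (hc : ∀ t, t < n → c t = c' t) (h : WEmb p a n c φ) :
    WEmb p a n c' φ := by
  refine ⟨h.1, h.2.1, fun i hi => ?_⟩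
  rw [← h.2.2 i hi]
  apply gmax_congr
  intro t ht1 ht2
  exact (hc t (by
    have := h.le_n (show i + 1 ≤ p by omega)
    omega)).symm

/-! ### concatenation -/

/-- labels of the concatenation `(p,a) ⌢ L ⌢ (q,b)`; total gap count `p + 1 + q`. -/
def catf (p : ℕ) (a : ℕ → ℕ) (L : ℕ) (b : ℕ → ℕ) : ℕ → ℕ :=
  fun i => if i < p then a i else if i = p then L else b (i - (p + 1))

lemma catf_lt {p a L b i} (h : i < p) : catf p a L b i = a i := by simp [catf, h]

lemma catf_eq {p a L b} : catf p a L b p = L := by simp [catf]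

lemma catf_gt {p a L b i} (h : p < i) : catf p a L b i = b (i - (p + 1)) := by
  have h1 : ¬ i < p := by omega
  have h2 : i ≠ p := by omega
  simp [catf, h1, h2]

lemma gmax_cat_left {p a L b x y} (h : y ≤ p) : gmax (catf p a L b) x y = gmax a x y :=
  gmax_congr (fun t _ ht2 => catf_lt (by omega))

lemma gmax_cat_right (p : ℕ) (a : ℕ → ℕ) (L : ℕ) (b : ℕ → ℕ) (x y : ℕ) :
    gmax (catf p a L b) (x + (p + 1)) (y + (p + 1)) = gmax b x y := by
  rw [gmax_shift]
  apply gmax_congr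
  intro t _ _
  rw [catf_gt (by omega)]
  congr 1
  omega

lemma gmax_cat_top {p a L b q x y} (hx : x ≤ p) (hy : p < y) (hyq : y ≤ p + 1 + q)
    (ha : ∀ i, i < p → a i ≤ L) (hb : ∀ i, i < q → b i ≤ L) :
    gmax (catf p a L b) x y = L := by
  apply le_antisymm
  · apply gmax_le
    intro t ht1 ht2
    rcases lt_trichotomy t p with h | h | h
    · rw [catf_lt h]; exact ha t h
    · subst h; rw [catf_eq]
    · rw [catf_gt h]; exact hb _ (by omega)
  · have := le_gmax (c := catf p a L b) hx hy
    rwa [catf_eq] at this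

/-- glueing maps: left map on points `0..α`, then right map shifted beyond separator -/
def combf (α d : ℕ) (h ρ : ℕ → ℕ) : ℕ → ℕ :=
  fun i => if i ≤ α then h i else ρ (i - (α + 1)) + (d + 1)

lemma wemb_combine {α A d D L q B v V h ρ}
    (hD : ∀ i, i < d → D i ≤ L) (hV : ∀ i, i < v → V i ≤ L)
    (hh : WEmb α A d D h) (hρ : WEmb q B v V ρ) :
    WEmb (α + 1 + q) (catf α A L B) (d + 1 + v) (catf d D L V) (combf α d h ρ) := by
  have hbound : ∀ i, i ≤ α → h i ≤ d := fun i hi => hh.le_n hi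
  have hρb : ∀ j, j ≤ q → ρ j ≤ v := fun j hj => hρ.le_n hj
  refine ⟨?_, ?_, ?_⟩
  · have : ¬ (α + 1 + q ≤ α) := by omega
    simp only [combf, if_neg this]
    have : α + 1 + q - (α + 1) = q := by omega
    rw [this]
    have := hρb q le_rfl
    omega
  · intro i hi
    by_cases h1 : i + 1 ≤ α
    · simp only [combf, if_pos h1, if_pos (by omega : i ≤ α)]
      exact hh.2.1 i (by omega)
    · by_cases h2 : i ≤ α
      · -- i = α
        have hiα : i = α := by omega
        simp only [combf, if_pos h2, if_neg h1]
        have := hbound i h2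
        omega
      · simp only [combf, if_neg h1, if_neg h2]
        have e : i + 1 - (α + 1) = (i - (α + 1)) + 1 := by omega
        rw [e]
        have := hρ.2.1 (i - (α + 1)) (by omega)
        omega
  · intro i hi
    by_cases h1 : i + 1 ≤ α
    · simp only [combf, if_pos h1, if_pos (by omega : i ≤ α)]
      rw [gmax_cat_left (hbound _ h1)]
      rw [catf_lt (by omega : i < α)]
      exact hh.2.2 i (by omega)
    · by_cases h2 : i ≤ α
      · have hiα : i = α := by omega
        subst hiα
        simp only [combf, if_pos h2, if_neg h1]
        rw [catf_eq]
        have e0 : i + 1 - (i + 1) = 0 := by omega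
        rw [e0]
        exact gmax_cat_top (hbound _ le_rfl) (by omega) (by have := hρb 0 (by omega); omega) hD hV
      · simp only [combf, if_neg h1, if_neg h2]
        have e : i + 1 - (α + 1) = (i - (α + 1)) + 1 := by omega
        rw [e, gmax_cat_right, catf_gt (by omega : α < i)]
        exact hρ.2.2 (i - (α + 1)) (by omega)

/-- shift embedding into the right part of a concatenation -/
lemma wemb_shiftR {q B v V ρ} (d : ℕ) (D : ℕ → ℕ) (L : ℕ) (hρ : WEmb q B v V ρ) :
    WEmb q B (d + 1 + v) (catf d D L V) (fun i => ρ i + (d + 1)) := by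
  refine ⟨?_, fun i hi => ?_, fun i hi => ?_⟩
  · show ρ q + (d + 1) ≤ d + 1 + v
    have := hρ.1; omega
  · show ρ i + (d + 1) < ρ (i + 1) + (d + 1)
    have := hρ.2.1 i hi; omega
  · show gmax (catf d D L V) (ρ i + (d + 1)) (ρ (i + 1) + (d + 1)) = B i
    rw [gmax_cat_right]
    exact hρ.2.2 i hi

/-! ### decomposition lemmas -/

lemma cross_ex {ξ : ℕ → ℕ} {d : ℕ} :
    ∀ n i, ξ i ≤ d → d < ξ (i + n) → ∃ t, i ≤ t ∧ t < i + n ∧ ξ t ≤ d ∧ d < ξ (t + 1) := by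
  intro n
  induction n with
  | zero => intro i h1 h2; rw [Nat.add_zero] at h2; omega
  | succ n ih =>
    intro i h1 h2
    by_cases hc : ξ (i + n) ≤ d
    · exact ⟨i + n, by omega, by omega, hc, by
        have e : i + n + 1 = i + (n + 1) := by omega
        rw [e]; exact h2⟩
    · obtain ⟨t, ht1, ht2, ht3, ht4⟩ := ih i h1 (by omega)
      exact ⟨t, ht1, by omega, ht3, ht4⟩

lemma all_high {p a n d D L V ξ β} (hξ : WEmb p a n (catf d D L V) ξ)
    (hlow : ∀ i, i < β → a i < L) (hβ : β ≤ p) (hhigh : d < ξ β) :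
    ∀ i, i ≤ p → d < ξ i := by
  intro i hi
  rcases le_or_gt β i with h | h
  · have := hξ.mono h hi
    omega
  · by_contra hc
    push_neg at hc
    obtain ⟨t, ht1, ht2, ht3, ht4⟩ := cross_ex (β - i) i hc (by
      have e : i + (β - i) = β := by omega
      rw [e]; exact hhigh)
    have htβ : t < β := by omega
    have hgap := hξ.2.2 t (by omega)
    have : L ≤ gmax (catf d D L V) (ξ t) (ξ (t + 1)) := by
      have := le_gmax (c := catf d D L V) (t := d) ht3 ht4
      rwa [catf_eq] at this
    have := hlow t htβ
    omega

lemma wemb_decomp_block {p a d D L v V ξ} (hD : ∀ t, t < d → D t < L)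
    (ha : ∀ i, i < p → a i < L)
    (hξ : WEmb p a (d + 1 + v) (catf d D L V) ξ) :
    (∃ h, WEmb p a d D h ∧ ∀ i, i ≤ p → ξ i = h i) ∨
    (∃ ξ', WEmb p a v V ξ' ∧ ∀ i, i ≤ p → ξ i = ξ' i + (d + 1)) := by
  by_cases hc : ξ p ≤ d
  · left
    refine ⟨ξ, ⟨hc, hξ.2.1, fun i hi => ?_⟩, fun i _ => rfl⟩
    have hle : ξ (i + 1) ≤ d := le_trans (hξ.mono (show i + 1 ≤ p by omega) le_rfl) hc
    rw [← gmax_cat_left (b := V) (L := L) hle]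
    exact hξ.2.2 i hi
  · right
    have hall : ∀ i, i ≤ p → d < ξ i := all_high hξ ha le_rfl (by omega)
    refine ⟨fun i => ξ i - (d + 1), ⟨?_, fun i hi => ?_, fun i hi => ?_⟩, fun i hi => ?_⟩
    · show ξ p - (d + 1) ≤ v
      have := hξ.1; have := hall p le_rfl; omega
    · show ξ i - (d + 1) < ξ (i + 1) - (d + 1)
      have := hξ.2.1 i hi
      have := hall i (by omega)
      have := hall (i + 1) (by omega)
      omega
    · show gmax V (ξ i - (d + 1)) (ξ (i + 1) - (d + 1)) = a i
      have h1 := hall i (by omega)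
      have h2 := hall (i + 1) (by omega)
      have e1 : ξ i - (d + 1) + (d + 1) = ξ i := by omega
      have e2 : ξ (i + 1) - (d + 1) + (d + 1) = ξ (i + 1) := by omega
      rw [← gmax_cat_right d D L V, e1, e2]
      exact hξ.2.2 i hi
    · show ξ i = ξ i - (d + 1) + (d + 1)
      have := hall i hi; omega

lemma wemb_decomp_split {p a α d D L v V ξ} (hαp : α < p) (hsep : a α = L)
    (hlow : ∀ i, i < α → a i < L) (hD : ∀ t, t < d → D t < L)
    (hξ : WEmb p a (d + 1 + v) (catf d D L V) ξ) :
    (∃ h ρ, WEmb α a d D h ∧ WEmb (p - (α + 1)) (fun j => a (j + (α + 1))) v V ρ ∧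
       ∀ i, i ≤ p → ξ i = combf α d h ρ i) ∨
    (∃ ξ', WEmb p a v V ξ' ∧ ∀ i, i ≤ p → ξ i = ξ' i + (d + 1)) := by
  by_cases hc : ξ α ≤ d
  · left
    have hh : WEmb α a d D ξ := by
      refine ⟨hc, fun i hi => hξ.2.1 i (by omega), fun i hi => ?_⟩
      have hle : ξ (i + 1) ≤ d := le_trans (hξ.mono (show i + 1 ≤ α by omega) (by omega)) hc
      rw [← gmax_cat_left (b := V) (L := L) hle]
      exact hξ.2.2 i (by omega)
    have hα1 : d < ξ (α + 1) := by
      by_contra hcc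
      push_neg at hcc
      have hgap := hξ.2.2 α hαp
      rw [gmax_cat_left (b := V) (L := L) hcc] at hgap
      have : gmax D (ξ α) (ξ (α + 1)) < L := by
        apply gmax_lt (hξ.2.1 α hαp)
        intro t _ ht2
        exact hD t (by omega)
      omega
    have hall : ∀ i, α + 1 ≤ i → i ≤ p → d < ξ i := by
      intro i h1 h2
      have := hξ.mono h1 h2
      omega
    refine ⟨ξ, fun j => ξ (j + (α + 1)) - (d + 1), hh, ⟨?_, fun j hj => ?_, fun j hj => ?_⟩,
      fun i hi => ?_⟩
    · show ξ (p - (α + 1) + (α + 1)) - (d + 1) ≤ v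
      have e : p - (α + 1) + (α + 1) = p := by omega
      rw [e]
      have := hξ.1; have := hall p (by omega) le_rfl; omega
    · show ξ (j + (α + 1)) - (d + 1) < ξ (j + 1 + (α + 1)) - (d + 1)
      have h1 := hall (j + (α + 1)) (by omega) (by omega)
      have h2 := hξ.2.1 (j + (α + 1)) (by omega)
      have e : j + 1 + (α + 1) = j + (α + 1) + 1 := by omega
      rw [e]
      omega
    · show gmax V (ξ (j + (α + 1)) - (d + 1)) (ξ (j + 1 + (α + 1)) - (d + 1)) = a (j + (α + 1))
      have h1 := hall (j + (α + 1)) (by omega) (by omega)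
      have h2 := hall (j + (α + 1) + 1) (by omega) (by omega)
      have e : j + 1 + (α + 1) = j + (α + 1) + 1 := by omega
      rw [e]
      have e1 : ξ (j + (α + 1)) - (d + 1) + (d + 1) = ξ (j + (α + 1)) := by omega
      have e2 : ξ (j + (α + 1) + 1) - (d + 1) + (d + 1) = ξ (j + (α + 1) + 1) := by omega
      rw [← gmax_cat_right d D L V, e1, e2]
      exact hξ.2.2 (j + (α + 1)) (by omega)
    · by_cases hiα : i ≤ α
      · show ξ i = combf α d ξ _ i
        rw [combf, if_pos hiα]
      · show ξ i = combf α d ξ _ i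
        rw [combf, if_neg hiα]
        show ξ i = ξ (i - (α + 1) + (α + 1)) - (d + 1) + (d + 1)
        have e : i - (α + 1) + (α + 1) = i := by omega
        rw [e]
        have := hall i (by omega) hi
        omega
  · right
    have hall : ∀ i, i ≤ p → d < ξ i := all_high hξ hlow (by omega) (by omega)
    refine ⟨fun i => ξ i - (d + 1), ⟨?_, fun i hi => ?_, fun i hi => ?_⟩, fun i hi => ?_⟩
    · show ξ p - (d + 1) ≤ v
      have := hξ.1; have := hall p le_rfl; omega
    · show ξ i - (d + 1) < ξ (i + 1) - (d + 1)
      have := hξ.2.1 i hi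
      have := hall i (by omega)
      have := hall (i + 1) (by omega)
      omega
    · show gmax V (ξ i - (d + 1)) (ξ (i + 1) - (d + 1)) = a i
      have h1 := hall i (by omega)
      have h2 := hall (i + 1) (by omega)
      have e1 : ξ i - (d + 1) + (d + 1) = ξ i := by omega
      have e2 : ξ (i + 1) - (d + 1) + (d + 1) = ξ (i + 1) := by omega
      rw [← gmax_cat_right d D L V, e1, e2]
      exact hξ.2.2 i hi
    · show ξ i = ξ i - (d + 1) + (d + 1)
      have := hall i hi; omega

/-! ### iterated concatenation `J^(M+1)` -/

def JPlen (e : ℕ) : ℕ → ℕ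
  | 0 => e
  | M + 1 => e + 1 + JPlen e M

def JPlab (e : ℕ) (cJ : ℕ → ℕ) (L : ℕ) : ℕ → ℕ → ℕ
  | 0 => cJ
  | M + 1 => catf e cJ L (JPlab e cJ L M)

lemma JPlen_eq (e M : ℕ) : JPlen e M = M * (e + 1) + e := by
  induction M with
  | zero => show e = 0 * (e + 1) + e; omega
  | succ M ih => show e + 1 + JPlen e M = _; rw [ih]; ring

lemma JPlab_le {e cJ L} (hcJ : ∀ i, i < e → cJ i ≤ L) :
    ∀ M t, t < JPlen e M → JPlab e cJ L M t ≤ L := by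
  intro M
  induction M with
  | zero => exact hcJ
  | succ M ih =>
    intro t ht
    show catf e cJ L (JPlab e cJ L M) t ≤ L
    rcases lt_trichotomy t e with h | h | h
    · rw [catf_lt h]; exact hcJ t h
    · subst h; rw [catf_eq]
    · rw [catf_gt h]
      apply ih
      have : JPlen e (M + 1) = e + 1 + JPlen e M := rfl
      omega

lemma JPlab_low {e cJ L} :
    ∀ M j t, j ≤ M → t < e → JPlab e cJ L M (j * (e + 1) + t) = cJ t := by
  intro M
  induction M with
  | zero =>
    intro j t hj ht
    have hj0 : j = 0 := by omega
    subst hj0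
    show cJ (0 * (e + 1) + t) = cJ t
    congr 1; omega
  | succ M ih =>
    intro j t hj ht
    show catf e cJ L (JPlab e cJ L M) (j * (e + 1) + t) = cJ t
    rcases Nat.eq_zero_or_pos j with h0 | hpos
    · subst h0
      rw [catf_lt (by omega : 0 * (e + 1) + t < e)]
      congr 1; omega
    · rw [catf_gt (by nlinarith : e < j * (e + 1) + t)]
      have e1 : j * (e + 1) + t - (e + 1) = (j - 1) * (e + 1) + t := by
        cases j with
        | zero => omega
        | succ j => simp [Nat.succ_mul]; ring_nf; omega
      rw [e1]
      exact ih (j - 1) t (by omega) ht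

lemma JPlab_sep {e cJ L} :
    ∀ M j, j < M → JPlab e cJ L M (j * (e + 1) + e) = L := by
  intro M
  induction M with
  | zero => intro j hj; omega
  | succ M ih =>
    intro j hj
    show catf e cJ L (JPlab e cJ L M) (j * (e + 1) + e) = L
    rcases Nat.eq_zero_or_pos j with h0 | hpos
    · subst h0
      have : 0 * (e + 1) + e = e := by omega
      rw [this, catf_eq]
    · rw [catf_gt (by nlinarith : e < j * (e + 1) + e)]
      have e1 : j * (e + 1) + e - (e + 1) = (j - 1) * (e + 1) + e := by
        cases j with
        | zero => omega
        | succ j => simp [Nat.succ_mul]; ring_nf; omega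
      rw [e1]
      exact ih (j - 1) (by omega)

/-! ### small helpers -/

lemma combf_le {α d : ℕ} {h ρ : ℕ → ℕ} {i : ℕ} (hi : i ≤ α) : combf α d h ρ i = h i := by
  show (if i ≤ α then h i else ρ (i - (α + 1)) + (d + 1)) = h i
  rw [if_pos hi]

lemma combf_gt {α d : ℕ} {h ρ : ℕ → ℕ} {i : ℕ} (hi : ¬ i ≤ α) :
    combf α d h ρ i = ρ (i - (α + 1)) + (d + 1) := by
  show (if i ≤ α then h i else ρ (i - (α + 1)) + (d + 1)) = _
  rw [if_neg hi]

def truncf (α : ℕ) (φ : ℕ → ℕ) : ℕ → ℕ := fun i => if i ≤ α then φ i else 0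

lemma truncf_le {α : ℕ} {φ : ℕ → ℕ} {i : ℕ} (hi : i ≤ α) : truncf α φ i = φ i := by
  show (if i ≤ α then φ i else 0) = φ i
  rw [if_pos hi]

lemma truncf_gt {α : ℕ} {φ : ℕ → ℕ} {i : ℕ} (hi : ¬ i ≤ α) : truncf α φ i = 0 := by
  show (if i ≤ α then φ i else 0) = 0
  rw [if_neg hi]

/-- the finite set of truncated candidate maps into a word with `d` gaps -/
noncomputable def SRset (α d : ℕ) : Finset (ℕ → ℕ) :=
  @Finset.image _ _ (Classical.decEq _)
    (fun (v : Fin (α + 1) → Fin (d + 1)) (i : ℕ) => if hi : i < α + 1 then (v ⟨i, hi⟩ : ℕ) else 0)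
    Finset.univ

lemma mem_SRset {α d : ℕ} {h : ℕ → ℕ} (hb : ∀ i, i ≤ α → h i ≤ d) :
    truncf α h ∈ SRset α d := by
  classical
  apply Finset.mem_image.2
  refine ⟨fun t => ⟨h t, Nat.lt_succ_of_le (hb t (by omega))⟩, Finset.mem_univ _, ?_⟩
  funext i
  by_cases hi : i < α + 1
  · rw [dif_pos hi, truncf_le (by omega : i ≤ α)]
  · rw [dif_neg hi, truncf_gt (by omega : ¬ i ≤ α)]

/-! ### multiple refinement -/

lemma multi_refine {M1 k p' : ℕ} (a' : ℕ → ℕ) (hk : 0 < k)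
    (HQ : ∀ tq tb, Over M1 tq tb → RT M1 k p' a' tq tb) :
    ∀ S : Finset (ℕ → ℕ), ∀ tq tb, Over M1 tq tb →
      ∃ v V, Over M1 v V ∧ ∀ F : (ℕ → ℕ) → (ℕ → ℕ) → Fin k, (∀ g₀, Inv p' (F g₀)) →
        ∃ Φ, WEmb tq tb v V Φ ∧ ∀ g₀ ∈ S, ∃ cg : Fin k,
          ∀ ρ, WEmb p' a' tq tb ρ → F g₀ (fun i => Φ (ρ i)) = cg := by
  classical
  intro S
  induction S using Finset.induction_on with
  | empty =>
    intro tq tb hT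
    exact ⟨tq, tb, hT, fun F _ =>
      ⟨fun i => i, wemb_id, fun g₀ hg => absurd hg (Finset.notMem_empty g₀)⟩⟩
  | @insert g₀ S hg₀ ih =>
    intro tq tb hT
    obtain ⟨v₁, V₁, hov₁, P₁⟩ := ih tq tb hT
    obtain ⟨v, V, hov, PQ⟩ := HQ v₁ V₁ hov₁
    refine ⟨v, V, hov, ?_⟩
    intro F hFinv
    obtain ⟨ψ, hψ, colψ, hcolψ⟩ := PQ (F g₀) (hFinv g₀)
    obtain ⟨Φ₁, hΦ₁, hc₁⟩ := P₁ (fun g σ => F g (fun i => ψ (σ i))) (fun g σ σ' hσ =>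
      hFinv g _ _ (fun i hi => by rw [hσ i hi]))
    refine ⟨fun i => ψ (Φ₁ i), hΦ₁.comp hψ, ?_⟩
    intro g hg
    rcases Finset.mem_insert.1 hg with h | h
    · subst h
      exact ⟨colψ, fun ρ hρ => hcolψ (fun i => Φ₁ (ρ i)) (hρ.comp hΦ₁)⟩
    · obtain ⟨cg, hcg⟩ := hc₁ g h
      exact ⟨cg, fun ρ hρ => hcg ρ hρ⟩

/-! ### assembling a Ramsey witness from the chain -/

lemma finish {m k p q e tc : ℕ} {a b cJ : ℕ → ℕ} (hk : 0 < k)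
    (CH : ∀ M, ∃ n c, Over (m + 1) n c ∧ ∀ χ : (ℕ → ℕ) → Fin k, Inv p χ →
      ∃ Θ, WEmb (JPlen e M) (JPlab e cJ m M) n c Θ ∧ ∃ col : ℕ → Fin k,
        ∀ ξ, WEmb p a (JPlen e M) (JPlab e cJ m M) ξ → χ (fun i => Θ (ξ i)) = col (ξ 0 / (e + 1)))
    (hη : ∀ jj : ℕ → ℕ, (∀ t t', t < t' → t' ≤ tc → jj t < jj t') →
      (∀ t, t ≤ tc → jj t ≤ k * tc) →
      ∃ η, WEmb q b (JPlen e (k * tc)) (JPlab e cJ m (k * tc)) η ∧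
        ∀ x, x ≤ q → ∃ t, t ≤ tc ∧ η x / (e + 1) = jj t) :
    RT (m + 1) k p a q b := by
  classical
  set M := k * tc with hM
  obtain ⟨n, c, hov, hprop⟩ := CH M
  refine ⟨n, c, hov, ?_⟩
  intro χ hχ
  obtain ⟨Θ, hΘ, col, hcol⟩ := hprop χ hχ
  have hcard : (Finset.univ : Finset (Fin k)).card * tc < (Finset.range (M + 1)).card := by
    rw [Finset.card_univ, Fintype.card_fin, Finset.card_range]
    omega
  obtain ⟨i, _, hfib⟩ := Finset.exists_lt_card_fiber_of_mul_lt_card_of_maps_to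
    (f := col) (fun x _ => Finset.mem_univ (col x)) hcard
  obtain ⟨F', hF'sub, hF'card⟩ := Finset.exists_subset_card_eq
    (show tc + 1 ≤ _ from hfib)
  set j := F'.orderEmbOfFin hF'card with hj
  set jj : ℕ → ℕ := fun t => j ⟨min t tc, by omega⟩ with hjj
  have hjmem : ∀ t, jj t ∈ F' := fun t => F'.orderEmbOfFin_mem hF'card _
  have hjF : ∀ t, col (jj t) = i ∧ jj t < M + 1 := by
    intro t
    have h1 := hF'sub (hjmem t)
    have h2 := Finset.mem_filter.1 h1
    exact ⟨h2.2, Finset.mem_range.1 h2.1⟩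
  have hjmono : ∀ t t', t < t' → t' ≤ tc → jj t < jj t' := by
    intro t t' h1 h2
    apply j.strictMono
    show (⟨min t tc, _⟩ : Fin (tc + 1)) < ⟨min t' tc, _⟩
    rw [Fin.lt_def]
    show min t tc < min t' tc
    omega
  obtain ⟨η, hη1, hη2⟩ := hη jj hjmono (fun t _ => by have := (hjF t).2; omega)
  refine ⟨fun x => Θ (η x), hη1.comp hΘ, i, ?_⟩
  intro g hg
  have hξ : WEmb p a (JPlen e M) (JPlab e cJ m M) (fun t => η (g t)) := hg.comp hη1
  have hres := hcol _ hξ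
  obtain ⟨t, _, hteq⟩ := hη2 (g 0) (hg.le_n (Nat.zero_le p))
  have h2 : col ((fun t => η (g t)) 0 / (e + 1)) = i := by
    show col (η (g 0) / (e + 1)) = i
    rw [hteq]
    exact (hjF t).1
  rw [h2] at hres
  exact hres

/-! ### the two alphabet/η constructions -/

lemma eta_zero {q M tc : ℕ} {b : ℕ → ℕ} (hb : Over 1 q b)
    (htc : tc = ((Finset.range q).filter (fun i => b i = 0)).card)
    (jj : ℕ → ℕ) (hjmono : ∀ t t', t < t' → t' ≤ tc → jj t < jj t')
    (hjM : ∀ t, t ≤ tc → jj t ≤ M) :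
    ∃ η, WEmb q b (JPlen 0 M) (JPlab 0 (fun _ => 0) 0 M) η ∧
      ∀ x, x ≤ q → ∃ t, t ≤ tc ∧ η x / (0 + 1) = jj t := by
  have hb0 : ∀ x, x < q → b x = 0 := fun x hx => by have := hb x hx; omega
  have htcq : tc = q := by
    rw [htc]
    rw [Finset.filter_true_of_mem (fun x hx => hb0 x (Finset.mem_range.1 hx)), Finset.card_range]
  have hlen : JPlen 0 M = M := by rw [JPlen_eq]; omega
  refine ⟨jj, ⟨?_, ?_, ?_⟩, ?_⟩
  · rw [hlen]; exact hjM q (by omega)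
  · intro x hx
    exact hjmono x (x + 1) (by omega) (by omega)
  · intro x hx
    rw [hb0 x hx]
    have h1 : jj x < jj (x + 1) := hjmono x (x + 1) (by omega) (by omega)
    apply Nat.le_antisymm
    · apply gmax_le
      intro u hu1 hu2
      apply JPlab_le (fun i hi => le_rfl)
      have := hjM (x + 1) (by omega)
      omega
    · exact Nat.zero_le _
  · intro x hx
    exact ⟨x, by omega, by rw [Nat.div_one]⟩

lemma eta_pos {m q M tc : ℕ} {b : ℕ → ℕ} (hm : 0 < m) (hb : Over (m + 1) q b)
    (htc : tc = ((Finset.range q).filter (fun i => b i = m)).card)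
    (jj : ℕ → ℕ) (hjmono : ∀ t t', t < t' → t' ≤ tc → jj t < jj t')
    (hjM : ∀ t, t ≤ tc → jj t ≤ M) :
    ∃ η, WEmb q b (JPlen q M) (JPlab q (fun i => min (b i) (m - 1)) m M) η ∧
      ∀ x, x ≤ q → ∃ t, t ≤ tc ∧ η x / (q + 1) = jj t := by
  classical
  set cJ : ℕ → ℕ := fun i => min (b i) (m - 1) with hcJ
  set blk : ℕ → ℕ := fun x => ((Finset.range x).filter (fun i => i < q ∧ b i = m)).card with hblk
  have hblk_le : ∀ x, blk x ≤ tc := by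
    intro x
    rw [htc]
    apply Finset.card_le_card
    intro u hu
    have h1 := Finset.mem_filter.1 hu
    exact Finset.mem_filter.2 ⟨Finset.mem_range.2 h1.2.1, h1.2.2⟩
  have hblk_succ : ∀ x, x < q → blk (x + 1) = (if b x = m then blk x + 1 else blk x) := by
    intro x hx
    show ((Finset.range (x + 1)).filter (fun i => i < q ∧ b i = m)).card = _
    rw [Finset.range_add_one, Finset.filter_insert]
    by_cases hbx : b x = m
    · rw [if_pos ⟨hx, hbx⟩, if_pos hbx,
        Finset.card_insert_of_notMem (fun hmem => by
          have := Finset.mem_range.1 (Finset.filter_subset _ _ hmem)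
          omega)]
    · rw [if_neg (fun hh => hbx hh.2), if_neg hbx]
  have hjM' : ∀ x, jj (blk x) ≤ M := fun x => hjM _ (hblk_le x)
  set η : ℕ → ℕ := fun x => jj (blk x) * (q + 1) + x with hη
  have hηle : ∀ x, x ≤ q → η x ≤ JPlen q M := by
    intro x hx
    rw [JPlen_eq]
    show jj (blk x) * (q + 1) + x ≤ M * (q + 1) + q
    have h1 : jj (blk x) * (q + 1) ≤ M * (q + 1) := Nat.mul_le_mul_right _ (hjM' x)
    omega
  refine ⟨η, ⟨hηle q le_rfl, ?_, ?_⟩, ?_⟩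
  · intro x hx
    show jj (blk x) * (q + 1) + x < jj (blk (x + 1)) * (q + 1) + (x + 1)
    rw [hblk_succ x hx]
    by_cases hbx : b x = m
    · rw [if_pos hbx]
      have h1 : jj (blk x) < jj (blk x + 1) := by
        apply hjmono _ _ (by omega)
        have := hblk_le (x + 1)
        rw [hblk_succ x hx, if_pos hbx] at this
        omega
      have h2 : jj (blk x) * (q + 1) ≤ jj (blk x + 1) * (q + 1) :=
        Nat.mul_le_mul_right _ (by omega)
      omega
    · rw [if_neg hbx]
      omega
  · intro x hx
    show gmax (JPlab q cJ m M) (jj (blk x) * (q + 1) + x) (jj (blk (x + 1)) * (q + 1) + (x + 1)) = b x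
    by_cases hbx : b x = m
    · -- separator gap
      have hblk1 : blk (x + 1) = blk x + 1 := by rw [hblk_succ x hx, if_pos hbx]
      have hblk1tc : blk x + 1 ≤ tc := by rw [← hblk1]; exact hblk_le (x + 1)
      have hj1 : jj (blk x) < jj (blk x + 1) := hjmono _ _ (by omega) hblk1tc
      rw [hblk1, hbx]
      apply Nat.le_antisymm
      · apply gmax_le
        intro u hu1 hu2
        apply JPlab_le (fun i _ => by show min (b i) (m - 1) ≤ m; omega)
        have h3 : jj (blk x + 1) * (q + 1) + (x + 1) ≤ JPlen q M := by
          rw [JPlen_eq]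
          have := Nat.mul_le_mul_right (q + 1) (hjM _ hblk1tc)
          omega
        omega
      · have ht0 : JPlab q cJ m M (jj (blk x) * (q + 1) + q) = m :=
          JPlab_sep M (jj (blk x)) (by
            have := hjM _ hblk1tc
            omega)
        have h4 : (jj (blk x) + 1) * (q + 1) ≤ jj (blk x + 1) * (q + 1) :=
          Nat.mul_le_mul_right _ (by omega)
        have h5 : jj (blk x) * (q + 1) + q < (jj (blk x) + 1) * (q + 1) := by
          rw [Nat.succ_mul]
          omega
        have h6 := le_gmax (c := JPlab q cJ m M) (t := jj (blk x) * (q + 1) + q)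
          (show jj (blk x) * (q + 1) + x ≤ jj (blk x) * (q + 1) + q by omega)
          (show jj (blk x) * (q + 1) + q < jj (blk x + 1) * (q + 1) + (x + 1) by omega)
        rw [ht0] at h6
        exact h6
    · -- non-separator gap
      have hblk1 : blk (x + 1) = blk x := by rw [hblk_succ x hx, if_neg hbx]
      rw [hblk1]
      have e1 : jj (blk x) * (q + 1) + (x + 1) = (jj (blk x) * (q + 1) + x) + 1 := by omega
      rw [e1, gmax_single]
      have h2 : JPlab q cJ m M (jj (blk x) * (q + 1) + x) = cJ x := JPlab_low M _ x (hjM' x) hx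
      rw [h2]
      show min (b x) (m - 1) = b x
      have := hb x hx
      omega
  · intro x hx
    refine ⟨blk x, hblk_le x, ?_⟩
    show (jj (blk x) * (q + 1) + x) / (q + 1) = jj (blk x)
    rw [Nat.mul_comm, Nat.mul_add_div (by omega)]
    have : x / (q + 1) = 0 := Nat.div_eq_of_lt (by omega)
    omega

/-! ### the word Ramsey theorem -/

theorem word_ramsey : ∀ m k, 0 < k → ∀ p a, Over m p a → ∀ q b, Over m q b →
    RT m k p a q b := by
  intro m
  induction m with
  | zero =>
    intro k hk p a ha q b hb
    have hp : p = 0 := by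
      by_contra h
      have := ha 0 (by omega)
      omega
    have hq : q = 0 := by
      by_contra h
      have := hb 0 (by omega)
      omega
    subst hp; subst hq
    refine ⟨0, b, hb, ?_⟩
    intro χ hχ
    refine ⟨fun i => i, wemb_id, χ (fun _ => 0), ?_⟩
    intro g hg
    apply hχ
    intro i hi
    have hi0 : i = 0 := by omega
    subst hi0
    show g 0 = 0
    have := hg.1
    omega
  | succ m Pm =>
    intro k hk p
    induction p using Nat.strong_induction_on with
    | _ p IH =>
    intro a ha q b hb
    classical
    -- the chain lemma
    have CH : ∀ e cJ, Over m e cJ → ∀ M, ∃ n c, Over (m + 1) n c ∧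
        ∀ χ : (ℕ → ℕ) → Fin k, Inv p χ →
          ∃ Θ, WEmb (JPlen e M) (JPlab e cJ m M) n c Θ ∧ ∃ col : ℕ → Fin k,
            ∀ ξ, WEmb p a (JPlen e M) (JPlab e cJ m M) ξ →
              χ (fun i => Θ (ξ i)) = col (ξ 0 / (e + 1)) := by
      intro e cJ hcJ
      rcases Classical.em (∃ i, i < p ∧ a i = m) with hs | hs
      · -- X contains a top-label gap
        have hαp : Nat.find hs < p := (Nat.find_spec hs).1
        have hαsep : a (Nat.find hs) = m := (Nat.find_spec hs).2
        set α := Nat.find hs with hα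
        have hlow : ∀ i, i < α → a i < m := by
          intro i hi
          have h1 := Nat.find_min hs hi
          have h2 := ha i (by omega)
          by_contra hc
          exact h1 ⟨by omega, by omega⟩
        set p' := p - (α + 1) with hp'
        set a' : ℕ → ℕ := fun j => a (j + (α + 1)) with ha'def
        have ha' : Over (m + 1) p' a' := fun j hj => ha _ (by omega)
        have HQ : ∀ tq tb, Over (m + 1) tq tb → RT (m + 1) k p' a' tq tb :=
          fun tq tb htb => IH p' (by omega) a' ha' tq tb htb
        have hafirst : Over m α a := fun i hi => hlow i hi
        obtain ⟨d, cD, hD, PD⟩ := Pm k hk α a hafirst e cJ hcJ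
        intro M
        induction M with
        | zero =>
          refine ⟨e, cJ, fun i hi => by have := hcJ i hi; omega, ?_⟩
          intro χ hχ
          refine ⟨fun i => i, wemb_id, fun _ => ⟨0, hk⟩, ?_⟩
          intro ξ hξ
          exfalso
          have hξ0 : WEmb p a e cJ ξ := hξ
          have hgap := hξ0.2.2 α hαp
          have : gmax cJ (ξ α) (ξ (α + 1)) < m := by
            apply gmax_lt (hξ0.2.1 α hαp)
            intro t _ ht2
            refine hcJ t ?_
            have := hξ0.le_n (show α + 1 ≤ p by omega)
            omega
          omega
        | succ M ihM =>
          obtain ⟨nM, cM, hovM, propM⟩ := ihM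
          obtain ⟨v, V, hovV, propV⟩ := multi_refine a' hk HQ (SRset α d) nM cM hovM
          refine ⟨d + 1 + v, catf d cD m V, ?_, ?_⟩
          · intro t ht
            rcases lt_trichotomy t d with h | h | h
            · rw [catf_lt h]; have := hD t h; omega
            · subst h; rw [catf_eq]; omega
            · rw [catf_gt h]; exact hovV _ (by omega)
          intro χ hχ
          set F : (ℕ → ℕ) → (ℕ → ℕ) → Fin k := fun g₀ σ => χ (combf α d g₀ σ) with hF
          have hFinv : ∀ g₀, Inv p' (F g₀) := by
            intro g₀ σ σ' hσ
            apply hχ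
            intro i hi
            by_cases hiα : i ≤ α
            · rw [combf_le hiα, combf_le hiα]
            · rw [combf_gt hiα, combf_gt hiα, hσ _ (by omega)]
          obtain ⟨Φ, hΦ, hconst⟩ := propV F hFinv
          have hcolgex : ∃ colg : (ℕ → ℕ) → Fin k, ∀ g₀ ∈ SRset α d, ∀ ρ,
              WEmb p' a' nM cM ρ → F g₀ (fun i => Φ (ρ i)) = colg g₀ := by
            refine ⟨fun g₀ => if hg : g₀ ∈ SRset α d then (hconst g₀ hg).choose else ⟨0, hk⟩, ?_⟩
            intro g₀ hg ρ hρ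
            show F g₀ (fun i => Φ (ρ i)) =
              if hg : g₀ ∈ SRset α d then (hconst g₀ hg).choose else ⟨0, hk⟩
            rw [dif_pos hg]
            exact (hconst g₀ hg).choose_spec ρ hρ
          obtain ⟨colg, hcolg⟩ := hcolgex
          obtain ⟨ψ, hψ, colD, hcolD⟩ := PD (fun h => colg (truncf α h)) (by
            intro φ φ' hφ
            have htr : truncf α φ = truncf α φ' := by
              funext i
              by_cases hiα : i ≤ α
              · rw [truncf_le hiα, truncf_le hiα]
                exact hφ i hiα
              · rw [truncf_gt hiα, truncf_gt hiα]
            show colg (truncf α φ) = colg (truncf α φ')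
            rw [htr])
          set χ' : (ℕ → ℕ) → Fin k :=
            fun σ => χ (fun i => if i ≤ p then Φ (σ i) + (d + 1) else 0) with hχ'def
          obtain ⟨ΘM, hΘM, colM, hcolM⟩ := propM χ' (by
            intro σ σ' hσ
            apply hχ
            intro i hi
            show (if i ≤ p then Φ (σ i) + (d + 1) else 0) =
              (if i ≤ p then Φ (σ' i) + (d + 1) else 0)
            by_cases hip : i ≤ p
            · rw [if_pos hip, if_pos hip, hσ i (by omega)]
            · rw [if_neg hip, if_neg hip])
          refine ⟨combf e d ψ (fun i => Φ (ΘM i)),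
            wemb_combine (fun i hi => le_of_lt (hD i hi))
              (fun i hi => by have := hovV i hi; omega) hψ (hΘM.comp hΦ), ?_⟩
          refine ⟨fun j => if j = 0 then colD else colM (j - 1), ?_⟩
          intro ξ hξ
          have hξ' : WEmb p a (e + 1 + JPlen e M) (catf e cJ m (JPlab e cJ m M)) ξ := hξ
          rcases wemb_decomp_split hαp hαsep hlow (fun t ht => hcJ t ht) hξ' with
            ⟨h, ρh, hh, hρh, hagr⟩ | ⟨ξ'', hξ'', hagr⟩
          · -- first block of ξ sits in the leading copy of J
            have key : ∀ i, i ≤ p → combf e d ψ (fun i => Φ (ΘM i)) (ξ i) =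
                combf α d (truncf α (fun t => ψ (h t))) (fun j => Φ (ΘM (ρh j))) i := by
              intro i hi
              by_cases hiα : i ≤ α
              · have e1 : ξ i = h i := by rw [hagr i hi, combf_le hiα]
                rw [e1, combf_le (hh.le_n hiα), combf_le hiα, truncf_le hiα]
              · have e1 : ξ i = ρh (i - (α + 1)) + (e + 1) := by rw [hagr i hi, combf_gt hiα]
                rw [e1, combf_gt (show ¬ ρh (i - (α + 1)) + (e + 1) ≤ e by omega),
                  combf_gt hiα]
                have e2 : ρh (i - (α + 1)) + (e + 1) - (e + 1) = ρh (i - (α + 1)) := by omega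
                rw [e2]
            have step1 : χ (fun i => combf e d ψ (fun i => Φ (ΘM i)) (ξ i)) =
                χ (combf α d (truncf α (fun t => ψ (h t))) (fun j => Φ (ΘM (ρh j)))) :=
              hχ _ _ key
            have hg₀mem : truncf α (fun t => ψ (h t)) ∈ SRset α d :=
              mem_SRset (fun i hi => (hh.comp hψ).le_n hi)
            have hρ : WEmb p' a' nM cM (fun j => ΘM (ρh j)) := hρh.comp hΘM
            have step2 := hcolg _ hg₀mem _ hρ
            have step3 := hcolD h hh
            have hidx : ξ 0 / (e + 1) = 0 := by
              apply Nat.div_eq_of_lt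
              have e1 : ξ 0 = h 0 := by rw [hagr 0 (Nat.zero_le p), combf_le (Nat.zero_le α)]
              have := hh.le_n (Nat.zero_le α)
              omega
            show _ = (if ξ 0 / (e + 1) = 0 then colD else colM (ξ 0 / (e + 1) - 1))
            rw [hidx, if_pos rfl]
            exact step1.trans (step2.trans step3)
          · -- ξ sits entirely in the right part
            have key : ∀ i, i ≤ p → combf e d ψ (fun i => Φ (ΘM i)) (ξ i) =
                (fun i => if i ≤ p then Φ ((fun t => ΘM (ξ'' t)) i) + (d + 1) else 0) i := by
              intro i hi
              have e1 : ξ i = ξ'' i + (e + 1) := hagr i hi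
              rw [e1, combf_gt (show ¬ ξ'' i + (e + 1) ≤ e by omega)]
              have e2 : ξ'' i + (e + 1) - (e + 1) = ξ'' i := by omega
              rw [e2]
              show Φ (ΘM (ξ'' i)) + (d + 1) =
                if i ≤ p then Φ (ΘM (ξ'' i)) + (d + 1) else 0
              rw [if_pos hi]
            have step1 : χ (fun i => combf e d ψ (fun i => Φ (ΘM i)) (ξ i)) =
                χ' (fun t => ΘM (ξ'' t)) := hχ _ _ key
            have step2 := hcolM ξ'' hξ''
            have hidx : ξ 0 / (e + 1) = ξ'' 0 / (e + 1) + 1 := by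
              rw [hagr 0 (Nat.zero_le p)]
              exact Nat.add_div_right _ (by omega)
            show _ = (if ξ 0 / (e + 1) = 0 then colD else colM (ξ 0 / (e + 1) - 1))
            rw [hidx, if_neg (Nat.succ_ne_zero (ξ'' 0 / (e + 1))), Nat.add_sub_cancel]
            exact step1.trans step2
      · -- X has no top-label gap
        have hlow : ∀ i, i < p → a i < m := by
          intro i hi
          have h2 := ha i hi
          by_contra hc
          exact hs ⟨i, hi, by omega⟩
        obtain ⟨d, cD, hD, PD⟩ := Pm k hk p a hlow e cJ hcJ
        intro M
        induction M with
        | zero =>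
          refine ⟨d, cD, fun i hi => by have := hD i hi; omega, ?_⟩
          intro χ hχ
          obtain ⟨ψ, hψ, colD, hcolD⟩ := PD χ hχ
          exact ⟨ψ, hψ, fun _ => colD, fun ξ hξ => hcolD ξ hξ⟩
        | succ M ihM =>
          obtain ⟨nM, cM, hovM, propM⟩ := ihM
          refine ⟨d + 1 + nM, catf d cD m cM, ?_, ?_⟩
          · intro t ht
            rcases lt_trichotomy t d with h | h | h
            · rw [catf_lt h]; have := hD t h; omega
            · subst h; rw [catf_eq]; omega
            · rw [catf_gt h]; exact hovM _ (by omega)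
          intro χ hχ
          obtain ⟨ψ, hψ, colD, hcolD⟩ := PD χ hχ
          set χ' : (ℕ → ℕ) → Fin k :=
            fun σ => χ (fun i => if i ≤ p then σ i + (d + 1) else 0) with hχ'def
          obtain ⟨ΘM, hΘM, colM, hcolM⟩ := propM χ' (by
            intro σ σ' hσ
            apply hχ
            intro i hi
            show (if i ≤ p then σ i + (d + 1) else 0) =
              (if i ≤ p then σ' i + (d + 1) else 0)
            by_cases hip : i ≤ p
            · rw [if_pos hip, if_pos hip, hσ i (by omega)]
            · rw [if_neg hip, if_neg hip])
          refine ⟨combf e d ψ ΘM,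
            wemb_combine (fun i hi => le_of_lt (hD i hi))
              (fun i hi => by have := hovM i hi; omega) hψ hΘM, ?_⟩
          refine ⟨fun j => if j = 0 then colD else colM (j - 1), ?_⟩
          intro ξ hξ
          have hξ' : WEmb p a (d + 1 + nM) (catf d cD m cM) (fun i => combf e d ψ ΘM (ξ i)) :=
            hξ.comp (wemb_combine (fun i hi => le_of_lt (hD i hi))
              (fun i hi => by have := hovM i hi; omega) hψ hΘM)
          rcases wemb_decomp_block (fun t ht => hcJ t ht) hlow hξ with
            ⟨h, hh, hagr⟩ | ⟨ξ'', hξ'', hagr⟩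
          · have step1 : χ (fun i => combf e d ψ ΘM (ξ i)) = χ (fun i => ψ (h i)) :=
              hχ _ _ (fun i hi => by rw [hagr i hi, combf_le (hh.le_n hi)])
            have step2 := hcolD h hh
            have hidx : ξ 0 / (e + 1) = 0 := by
              apply Nat.div_eq_of_lt
              have e1 : ξ 0 = h 0 := hagr 0 (Nat.zero_le p)
              have := hh.le_n (Nat.zero_le p)
              omega
            show _ = (if ξ 0 / (e + 1) = 0 then colD else colM (ξ 0 / (e + 1) - 1))
            rw [hidx, if_pos rfl]
            exact step1.trans step2
          · have key : ∀ i, i ≤ p → combf e d ψ ΘM (ξ i) =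
                (fun i => if i ≤ p then (fun t => ΘM (ξ'' t)) i + (d + 1) else 0) i := by
              intro i hi
              have e1 : ξ i = ξ'' i + (e + 1) := hagr i hi
              rw [e1, combf_gt (show ¬ ξ'' i + (e + 1) ≤ e by omega)]
              have e2 : ξ'' i + (e + 1) - (e + 1) = ξ'' i := by omega
              rw [e2]
              show ΘM (ξ'' i) + (d + 1) =
                if i ≤ p then ΘM (ξ'' i) + (d + 1) else 0
              rw [if_pos hi]
            have step1 : χ (fun i => combf e d ψ ΘM (ξ i)) =
                χ' (fun t => ΘM (ξ'' t)) := hχ _ _ key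
            have step2 := hcolM ξ'' hξ''
            have hidx : ξ 0 / (e + 1) = ξ'' 0 / (e + 1) + 1 := by
              rw [hagr 0 (Nat.zero_le p)]
              exact Nat.add_div_right _ (by omega)
            show _ = (if ξ 0 / (e + 1) = 0 then colD else colM (ξ 0 / (e + 1) - 1))
            rw [hidx, if_neg (Nat.succ_ne_zero (ξ'' 0 / (e + 1))), Nat.add_sub_cancel]
            exact step1.trans step2
    -- now assemble, choosing the alphabet word according to `m`
    classical
    rcases Nat.eq_zero_or_pos m with hm | hm
    · subst hm
      set tc := ((Finset.range q).filter (fun i => b i = 0)).card with htc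
      exact finish hk (CH 0 (fun _ => 0) (fun i hi => by omega))
        (fun jj hjmono hjM => eta_zero hb htc jj hjmono hjM)
    · set tc := ((Finset.range q).filter (fun i => b i = m)).card with htc
      exact finish hk (CH q (fun i => min (b i) (m - 1))
        (fun i _ => by show min (b i) (m - 1) < m; omega))
        (fun jj hjmono hjM => eta_pos hm hb htc jj hjmono hjM)

/-! ### building a ConvOrdUltra space from a word -/

def wdist (n : ℕ) (c : ℕ → ℕ) (v : ℕ → ℝ) (i j : Fin (n + 1)) : ℝ :=
  if i < j then v (gmax c i j) else if j < i then v (gmax c j i) else 0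

section wdist

variable {n m : ℕ} {c : ℕ → ℕ} {v : ℕ → ℝ}

lemma vmax (hvmono : ∀ s t, s < t → t < m → v s < v t) :
    ∀ s t, s < m → t < m → v (max s t) = max (v s) (v t) := by
  intro s t hs ht
  rcases lt_trichotomy s t with h | h | h
  · rw [max_eq_right (le_of_lt h), max_eq_right (le_of_lt (hvmono s t h ht))]
  · subst h; rw [max_self, max_self]
  · rw [max_eq_left (le_of_lt h), max_eq_left (le_of_lt (hvmono t s h hs))]

lemma gmax_lt_m (hc : Over m n c) {i j : ℕ} (hij : i < j) (hj : j ≤ n) :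
    gmax c i j < m :=
  gmax_lt hij (fun t _ ht2 => hc t (by omega))

lemma wdist_self (i : Fin (n + 1)) : wdist n c v i i = 0 := by
  rw [wdist, if_neg (lt_irrefl i), if_neg (lt_irrefl i)]

lemma wdist_comm (i j : Fin (n + 1)) : wdist n c v i j = wdist n c v j i := by
  rcases lt_trichotomy i j with h | h | h
  · rw [wdist, wdist, if_pos h, if_neg (not_lt_of_gt h), if_pos h]
  · subst h; rfl
  · rw [wdist, wdist, if_pos h, if_neg (not_lt_of_gt h), if_pos h]

lemma wdist_lt {i j : Fin (n + 1)} (h : i < j) :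
    wdist n c v i j = v (gmax c i j) := by
  rw [wdist, if_pos h]

lemma wdist_pos (hc : Over m n c) (hvpos : ∀ t, t < m → 0 < v t)
    {i j : Fin (n + 1)} (hij : i ≠ j) :
    0 < wdist n c v i j := by
  rcases lt_trichotomy i j with h | h | h
  · rw [wdist_lt h]
    exact hvpos _ (gmax_lt_m hc h (Nat.lt_succ_iff.1 j.isLt))
  · exact absurd h hij
  · rw [wdist_comm, wdist_lt h]
    exact hvpos _ (gmax_lt_m hc h (Nat.lt_succ_iff.1 i.isLt))

lemma wdist_nonneg (hc : Over m n c) (hvpos : ∀ t, t < m → 0 < v t)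
    (i j : Fin (n + 1)) : 0 ≤ wdist n c v i j := by
  rcases eq_or_ne i j with h | h
  · subst h; rw [wdist_self]
  · exact le_of_lt (wdist_pos hc hvpos h)

lemma wdist_between (hc : Over m n c) (hvmono : ∀ s t, s < t → t < m → v s < v t)
    {i j l : Fin (n + 1)} (h1 : i < j) (h2 : j < l) :
    wdist n c v i l = max (wdist n c v i j) (wdist n c v j l) := by
  rw [wdist_lt (lt_trans h1 h2), wdist_lt h1, wdist_lt h2,
    gmax_split (le_of_lt (show (i:ℕ) < (j:ℕ) from h1)) (le_of_lt (show (j:ℕ) < (l:ℕ) from h2))]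
  exact vmax hvmono _ _ (gmax_lt_m hc h1 (by omega)) (gmax_lt_m hc h2 (Nat.lt_succ_iff.1 l.isLt))

lemma wdist_ultra_lt (hc : Over m n c) (hvmono : ∀ s t, s < t → t < m → v s < v t)
    {x y z : Fin (n + 1)} (hxz : x < z) :
    wdist n c v x z ≤ max (wdist n c v x y) (wdist n c v y z) := by
  rcases lt_trichotomy y x with h | h | h
  · have hb := wdist_between hc hvmono h hxz  -- wdist y z = max (wdist y x) (wdist x z)
    apply le_max_of_le_right
    rw [hb]
    exact le_max_right _ _
  · subst h
    exact le_max_right _ _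
  · rcases lt_trichotomy y z with h2 | h2 | h2
    · rw [wdist_between hc hvmono h h2]
    · subst h2
      exact le_max_left _ _
    · have hb := wdist_between hc hvmono hxz h2 -- wdist x y = max (wdist x z) (wdist z y)
      apply le_max_of_le_left
      rw [hb]
      exact le_max_left _ _

noncomputable def mkW (n m : ℕ) (c : ℕ → ℕ) (v : ℕ → ℝ)
    (hc : Over m n c) (hvpos : ∀ t, t < m → 0 < v t)
    (hvmono : ∀ s t, s < t → t < m → v s < v t) : ConvOrdUltra where
  U := Fin (n + 1)
  finite := inferInstance
  dist := wdist n c v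
  dist_self := wdist_self
  eq_of_dist_eq_zero := by
    intro x y h
    by_contra hne
    exact absurd h (ne_of_gt (wdist_pos hc hvpos hne))
  dist_comm := wdist_comm
  ultra := by
    intro x y z
    rcases lt_trichotomy x z with h | h | h
    · exact wdist_ultra_lt hc hvmono h
    · subst h
      rw [wdist_self]
      exact le_max_of_le_left (wdist_nonneg hc hvpos _ _)
    · rw [wdist_comm, max_comm, wdist_comm x y, wdist_comm y z]
      exact wdist_ultra_lt hc hvmono h
  lt := fun i j => i < j
  lt_irrefl := fun x => lt_irrefl x
  lt_trans := fun x y z h1 h2 => lt_trans h1 h2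
  lt_total := fun x y => by
    rcases lt_trichotomy x y with h | h | h
    · exact Or.inl h
    · exact Or.inr (Or.inl h)
    · exact Or.inr (Or.inr h)
  convex := by
    intro u r x y z hux huy hxz hzy
    rcases lt_trichotomy u z with h | h | h
    · have hb := wdist_between hc hvmono h hzy
      rw [hb] at huy
      exact le_trans (le_max_left _ _) huy
    · subst h
      rw [wdist_self]
      exact le_trans (wdist_nonneg hc hvpos u x) hux
    · have hb := wdist_between hc hvmono hxz h
      rw [wdist_comm u x, hb] at hux
      rw [wdist_comm]
      exact le_trans (le_max_right _ _) hux

end wdist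

/-! ### basic facts about ConvOrdUltra -/

lemma cou_dist_nonneg (Z : ConvOrdUltra) (x y : Z.U) : 0 ≤ Z.dist x y := by
  have h := Z.ultra x y x
  rw [Z.dist_self, Z.dist_comm y x, max_self] at h
  exact h

lemma cou_between (Z : ConvOrdUltra) {x y z : Z.U} (h1 : Z.lt x y) (h2 : Z.lt y z) :
    Z.dist x z = max (Z.dist x y) (Z.dist y z) := by
  apply le_antisymm (Z.ultra x y z)
  have hr : 0 ≤ Z.dist x z := cou_dist_nonneg Z x z
  have hy : Z.dist x y ≤ Z.dist x z := by
    apply Z.convex x (Z.dist x z) x z y _ le_rfl h1 h2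
    rw [Z.dist_self]
    exact hr
  have hz : Z.dist y z ≤ Z.dist x z := by
    have h := Z.ultra y x z
    rw [Z.dist_comm y x] at h
    exact le_trans h (max_le hy le_rfl)
  exact max_le hy hz

lemma repr_pair (Z : ConvOrdUltra) (n : ℕ) (pt : ℕ → Z.U)
    (hpt : ∀ i, i < n → Z.lt (pt i) (pt (i + 1)))
    (m : ℕ) (w : ℕ → ℝ) (b : ℕ → ℕ) (hbm : ∀ i, i < n → b i < m)
    (hwmax : ∀ s t, s < m → t < m → w (max s t) = max (w s) (w t))
    (hb : ∀ i, i < n → w (b i) = Z.dist (pt i) (pt (i + 1))) :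
    ∀ i j, i < j → j ≤ n → Z.dist (pt i) (pt j) = w (gmax b i j) := by
  have hlt : ∀ i j, i < j → j ≤ n → Z.lt (pt i) (pt j) := by
    have key : ∀ d i, i + (d + 1) ≤ n → Z.lt (pt i) (pt (i + (d + 1))) := by
      intro d
      induction d with
      | zero => intro i hi; exact hpt i (by omega)
      | succ d ih =>
        intro i hi
        have h1 := ih i (by omega)
        have h2 := hpt (i + (d + 1)) (by omega)
        have e : i + (d + 1 + 1) = i + (d + 1) + 1 := by omega
        rw [e]
        exact Z.lt_trans _ _ _ h1 h2
    intro i j hij hj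
    have := key (j - i - 1) i (by omega)
    have e : i + (j - i - 1 + 1) = j := by omega
    rwa [e] at this
  have key : ∀ d i, i + (d + 1) ≤ n →
      Z.dist (pt i) (pt (i + (d + 1))) = w (gmax b i (i + (d + 1))) := by
    intro d
    induction d with
    | zero =>
      intro i hi
      rw [gmax_single, hb i (by omega)]
    | succ d ih =>
      intro i hi
      have e : i + (d + 1 + 1) = i + (d + 1) + 1 := by omega
      rw [e]
      have hbtw := cou_between Z (hlt i (i + (d + 1)) (by omega) (by omega))
        (hpt (i + (d + 1)) (by omega))
      rw [hbtw, ih i (by omega), ← hb (i + (d + 1)) (by omega),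
        ← hwmax _ _ (gmax_lt (by omega) (fun t ht1 ht2 => hbm t (by omega))) (hbm _ (by omega)),
        gmax_split (show i ≤ i + (d + 1) by omega) (show i + (d + 1) ≤ i + (d + 1) + 1 by omega),
        gmax_single]
  intro i j hij hj
  have := key (j - i - 1) i (by omega)
  have e : i + (j - i - 1 + 1) = j := by omega
  rwa [e] at this


/-! ### enumerating a ConvOrdUltra space -/

lemma exists_enum (Z : ConvOrdUltra) (hne : Nonempty Z.U) :
    ∃ (nz : ℕ) (pt : Fin (nz + 1) → Z.U) (inv : Z.U → Fin (nz + 1)),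
      (∀ u, pt (inv u) = u) ∧ (∀ i, inv (pt i) = i) ∧
      (∀ i j : Fin (nz + 1), i < j → Z.lt (pt i) (pt j)) ∧
      (∀ u w, Z.lt u w → inv u < inv w) := by
  classical
  letI : LinearOrder Z.U :=
    { le := fun a b => a = b ∨ Z.lt a b
      lt := Z.lt
      le_refl := fun a => Or.inl rfl
      le_trans := by
        rintro a b c (rfl | hab) hbc
        · exact hbc
        · rcases hbc with rfl | hbc
          · exact Or.inr hab
          · exact Or.inr (Z.lt_trans _ _ _ hab hbc)
      lt_iff_le_not_ge := by
        intro a b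
        constructor
        · intro h
          refine ⟨Or.inr h, ?_⟩
          rintro (rfl | hba)
          · exact Z.lt_irrefl _ h
          · exact Z.lt_irrefl _ (Z.lt_trans _ _ _ h hba)
        · rintro ⟨rfl | hab, hn⟩
          · exact absurd (Or.inl rfl) hn
          · exact hab
      le_antisymm := by
        rintro a b (rfl | hab) (h | hba)
        · rfl
        · rfl
        · exact h.symm
        · exact absurd (Z.lt_trans _ _ _ hab hba) (Z.lt_irrefl _)
      le_total := by
        intro a b
        rcases Z.lt_total a b with h | h | h
        · exact Or.inl (Or.inr h)
        · exact Or.inl (Or.inl h)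
        · exact Or.inr (Or.inr h)
      toDecidableLE := Classical.decRel _ }
  letI : Fintype Z.U := @Fintype.ofFinite _ Z.finite
  have hcard : 0 < Fintype.card Z.U := Fintype.card_pos_iff.2 hne
  obtain ⟨nz, hnz⟩ : ∃ nz, Fintype.card Z.U = nz + 1 :=
    ⟨Fintype.card Z.U - 1, by omega⟩
  set eZ := Fintype.orderIsoFinOfCardEq Z.U hnz with heZ
  refine ⟨nz, eZ, eZ.symm, fun u => eZ.apply_symm_apply u, fun i => eZ.symm_apply_apply i,
    ?_, ?_⟩
  · intro i j hij
    exact eZ.strictMono hij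
  · intro u w huw
    exact eZ.symm.strictMono (show u < w from huw)

theorem final_ramsey (k : ℕ) (hk : 2 ≤ k) (X Y : ConvOrdUltra)
    (hXY : ∃ f, ConvOrdUltra.Emb X Y f) :
    ∃ W : ConvOrdUltra,
      ∀ χ : (X.U → W.U) → Fin k,
        ∃ w, ConvOrdUltra.Emb Y W w ∧ ∃ i : Fin k,
          ∀ g, ConvOrdUltra.Emb X Y g → χ (w ∘ g) = i := by
  classical
  obtain ⟨f₀, hf₀⟩ := hXY
  have hk' : 0 < k := by omega
  by_cases hXe : IsEmpty X.U
  · refine ⟨Y, fun χ => ⟨id, ⟨fun a b h => h, fun a b => rfl, fun a b h => h⟩,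
      χ (id ∘ f₀), ?_⟩⟩
    intro g hg
    congr 1
    funext x
    exact hXe.elim x
  · have hXne : Nonempty X.U := not_isEmpty_iff.1 hXe
    have hYne : Nonempty Y.U := ⟨f₀ hXne.some⟩
    letI : Fintype Y.U := @Fintype.ofFinite _ Y.finite
    -- the distance set of Y
    set SY : Finset ℝ := Finset.image (fun pr : Y.U × Y.U => Y.dist pr.1 pr.2)
      (Finset.filter (fun pr : Y.U × Y.U => pr.1 ≠ pr.2) Finset.univ) with hSYdef
    set m : ℕ := SY.card with hm
    set vIso := SY.orderIsoOfFin rfl with hvIso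
    set v : ℕ → ℝ := fun t => if h : t < m then (vIso ⟨t, h⟩ : ℝ) else 0 with hv
    set idx : ℝ → ℕ := fun r => if h : r ∈ SY then ((vIso.symm ⟨r, h⟩ : Fin m) : ℕ) else 0
      with hidxdef
    have hvidx : ∀ r, r ∈ SY → v (idx r) = r := by
      intro r hr
      show v (if h : r ∈ SY then ((vIso.symm ⟨r, h⟩ : Fin m) : ℕ) else 0) = r
      rw [dif_pos hr]
      show (if h : ((vIso.symm ⟨r, hr⟩ : Fin m) : ℕ) < m then
        (vIso ⟨((vIso.symm ⟨r, hr⟩ : Fin m) : ℕ), h⟩ : ℝ) else 0) = r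
      rw [dif_pos (vIso.symm ⟨r, hr⟩).isLt]
      have : (⟨((vIso.symm ⟨r, hr⟩ : Fin m) : ℕ), (vIso.symm ⟨r, hr⟩).isLt⟩ : Fin m) =
          vIso.symm ⟨r, hr⟩ := rfl
      rw [this, OrderIso.apply_symm_apply]
    have hidxlt : ∀ r, r ∈ SY → idx r < m := by
      intro r hr
      show (if h : r ∈ SY then ((vIso.symm ⟨r, h⟩ : Fin m) : ℕ) else 0) < m
      rw [dif_pos hr]
      exact (vIso.symm ⟨r, hr⟩).isLt
    have hmemSY : ∀ r, r ∈ SY → 0 < r := by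
      intro r hr
      rw [hSYdef] at hr
      obtain ⟨pr, hpr, heq⟩ := Finset.mem_image.1 hr
      have hne := (Finset.mem_filter.1 hpr).2
      subst heq
      rcases lt_or_eq_of_le (cou_dist_nonneg Y pr.1 pr.2) with h | h
      · exact h
      · exact absurd (Y.eq_of_dist_eq_zero _ _ h.symm) hne
    have hvmem : ∀ t, t < m → v t ∈ SY := by
      intro t ht
      show (if h : t < m then (vIso ⟨t, h⟩ : ℝ) else 0) ∈ SY
      rw [dif_pos ht]
      exact (vIso ⟨t, ht⟩).2
    have hvpos : ∀ t, t < m → 0 < v t := fun t ht => hmemSY _ (hvmem t ht)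
    have hvmono : ∀ s t, s < t → t < m → v s < v t := by
      intro s t hst ht
      show (if h : s < m then (vIso ⟨s, h⟩ : ℝ) else 0) <
        (if h : t < m then (vIso ⟨t, h⟩ : ℝ) else 0)
      rw [dif_pos (by omega : s < m), dif_pos ht]
      have := vIso.strictMono (show (⟨s, by omega⟩ : Fin m) < ⟨t, ht⟩ from hst)
      exact this
    have hvinj : ∀ s t, s < m → t < m → v s = v t → s = t := by
      intro s t hs ht hst
      rcases lt_trichotomy s t with h | h | h
      · have := hvmono s t h ht; linarith
      · exact h
      · have := hvmono t s h hs; linarith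
    -- enumerations
    obtain ⟨pX, ptX, invX, hptinvX, hinvptX, hltX, hinvmonoX⟩ := exists_enum X hXne
    obtain ⟨qY, ptY, invY, hptinvY, hinvptY, hltY, hinvmonoY⟩ := exists_enum Y hYne
    have hptXne : ∀ i j : Fin (pX + 1), i < j → ptX i ≠ ptX j := by
      intro i j hij heq
      have := hltX i j hij
      rw [heq] at this
      exact X.lt_irrefl _ this
    have hptYne : ∀ i j : Fin (qY + 1), i < j → ptY i ≠ ptY j := by
      intro i j hij heq
      have := hltY i j hij
      rw [heq] at this
      exact Y.lt_irrefl _ this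
    have hmemX : ∀ (x x' : X.U), x ≠ x' → X.dist x x' ∈ SY := by
      intro x x' hne
      rw [← hf₀.2.1, hSYdef]
      apply Finset.mem_image.2
      refine ⟨(f₀ x, f₀ x'), Finset.mem_filter.2 ⟨Finset.mem_univ _, ?_⟩, rfl⟩
      exact fun h => hne (hf₀.1 h)
    have hmemY : ∀ (y y' : Y.U), y ≠ y' → Y.dist y y' ∈ SY := by
      intro y y' hne
      rw [hSYdef]
      apply Finset.mem_image.2
      exact ⟨(y, y'), Finset.mem_filter.2 ⟨Finset.mem_univ _, hne⟩, rfl⟩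
    -- words
    set ptX' : ℕ → X.U := fun i => ptX ⟨min i pX, by omega⟩ with hptX'
    set ptY' : ℕ → Y.U := fun i => ptY ⟨min i qY, by omega⟩ with hptY'
    have hptX'eq : ∀ i (hi : i ≤ pX), ptX' i = ptX ⟨i, by omega⟩ := by
      intro i hi
      show ptX ⟨min i pX, _⟩ = ptX ⟨i, _⟩
      congr 1
      exact Fin.ext (by simp; omega)
    have hptY'eq : ∀ i (hi : i ≤ qY), ptY' i = ptY ⟨i, by omega⟩ := by
      intro i hi
      show ptY ⟨min i qY, _⟩ = ptY ⟨i, _⟩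
      congr 1
      exact Fin.ext (by simp; omega)
    set aX : ℕ → ℕ := fun i => idx (X.dist (ptX' i) (ptX' (i + 1))) with haXdef
    set bY : ℕ → ℕ := fun i => idx (Y.dist (ptY' i) (ptY' (i + 1))) with hbYdef
    have hXconsne : ∀ i, i < pX → ptX' i ≠ ptX' (i + 1) := by
      intro i hi
      rw [hptX'eq i (by omega), hptX'eq (i + 1) (by omega)]
      exact hptXne _ _ (by simp [Fin.lt_def])
    have hYconsne : ∀ i, i < qY → ptY' i ≠ ptY' (i + 1) := by
      intro i hi
      rw [hptY'eq i (by omega), hptY'eq (i + 1) (by omega)]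
      exact hptYne _ _ (by simp [Fin.lt_def])
    have haX : Over m pX aX := by
      intro i hi
      exact hidxlt _ (hmemX _ _ (hXconsne i hi))
    have hbY : Over m qY bY := by
      intro i hi
      exact hidxlt _ (hmemY _ _ (hYconsne i hi))
    have hptX'lt : ∀ i, i < pX → X.lt (ptX' i) (ptX' (i + 1)) := by
      intro i hi
      rw [hptX'eq i (by omega), hptX'eq (i + 1) (by omega)]
      exact hltX _ _ (by simp [Fin.lt_def])
    have hptY'lt : ∀ i, i < qY → Y.lt (ptY' i) (ptY' (i + 1)) := by
      intro i hi
      rw [hptY'eq i (by omega), hptY'eq (i + 1) (by omega)]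
      exact hltY _ _ (by simp [Fin.lt_def])
    have reprX : ∀ i j, i < j → j ≤ pX → X.dist (ptX' i) (ptX' j) = v (gmax aX i j) :=
      repr_pair X pX ptX' hptX'lt m v aX haX (vmax hvmono)
        (fun i hi => hvidx _ (hmemX _ _ (hXconsne i hi)))
    have reprY : ∀ i j, i < j → j ≤ qY → Y.dist (ptY' i) (ptY' j) = v (gmax bY i j) :=
      repr_pair Y qY ptY' hptY'lt m v bY hbY (vmax hvmono)
        (fun i hi => hvidx _ (hmemY _ _ (hYconsne i hi)))
    -- apply the word Ramsey theorem
    obtain ⟨n, c, hc, hprop⟩ := word_ramsey m k hk' pX aX haX qY bY hbY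
    refine ⟨mkW n m c v hc hvpos hvmono, ?_⟩
    intro χ
    set toW : ℕ → Fin (n + 1) := fun t => if h : t < n + 1 then ⟨t, h⟩ else ⟨0, Nat.succ_pos n⟩
      with htoWdef
    have htoW : ∀ t, t ≤ n → ((toW t : Fin (n + 1)) : ℕ) = t := by
      intro t ht
      have h1 : toW t = ⟨t, by omega⟩ := by
        show (if h : t < n + 1 then (⟨t, h⟩ : Fin (n + 1)) else ⟨0, Nat.succ_pos n⟩) =
          ⟨t, by omega⟩
        rw [dif_pos (show t < n + 1 by omega)]
      rw [h1]
    set χw : (ℕ → ℕ) → Fin k := fun φ => χ (fun x => toW (φ ((invX x : Fin (pX + 1)) : ℕ)))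
      with hχwdef
    have hχwinv : Inv pX χw := by
      intro φ φ' hφ
      show χ _ = χ _
      congr 1
      funext x
      rw [hφ _ (by omega : ((invX x : Fin (pX + 1)) : ℕ) ≤ pX)]
    obtain ⟨ψ, hψ, col, hcol⟩ := hprop χw hχwinv
    set w : Y.U → Fin (n + 1) := fun y => toW (ψ ((invY y : Fin (qY + 1)) : ℕ)) with hwdef
    have hψle : ∀ u, u ≤ qY → ψ u ≤ n := fun u hu => hψ.le_n hu
    have hwlt : ∀ z z', Y.lt z z' → w z < w z' := by
      intro z z' h
      have h1 : (invY z : Fin (qY + 1)) < invY z' := hinvmonoY _ _ h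
      have h2 : ψ ((invY z : Fin (qY + 1)) : ℕ) < ψ ((invY z' : Fin (qY + 1)) : ℕ) :=
        hψ.strictMono h1 (by omega)
      show toW _ < toW _
      rw [Fin.lt_def, htoW _ (le_trans (le_of_lt h2) (hψle _ (by omega))),
        htoW _ (hψle _ (by omega))]
      exact h2
    have hwdist : ∀ z z', Y.lt z z' →
        wdist n c v (w z) (w z') = Y.dist z z' := by
      intro z z' h
      rw [wdist_lt (hwlt z z' h)]
      have e1 : ((w z : Fin (n + 1)) : ℕ) = ψ ((invY z : Fin (qY + 1)) : ℕ) :=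
        htoW _ (hψle _ (by omega))
      have e2 : ((w z' : Fin (n + 1)) : ℕ) = ψ ((invY z' : Fin (qY + 1)) : ℕ) :=
        htoW _ (hψle _ (by omega))
      rw [e1, e2, hψ.gmax_pairs _ _ (hinvmonoY _ _ h) (by omega),
        ← reprY _ _ (hinvmonoY _ _ h) (by omega)]
      rw [hptY'eq _ (by omega), hptY'eq _ (by omega)]
      have e3 : ∀ u : Y.U, ptY ⟨((invY u : Fin (qY + 1)) : ℕ), by omega⟩ = u := by
        intro u
        have : (⟨((invY u : Fin (qY + 1)) : ℕ), by omega⟩ : Fin (qY + 1)) = invY u :=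
          Fin.ext rfl
        rw [this, hptinvY]
      rw [e3, e3]
    refine ⟨w, ⟨?_, ?_, ?_⟩, col, ?_⟩
    · -- injective
      intro z z' h
      rcases Y.lt_total z z' with hlt | heq | hlt
      · exfalso
        have h2 := hwlt z z' hlt
        rw [h] at h2
        exact lt_irrefl _ h2
      · exact heq
      · exfalso
        have h2 := hwlt z' z hlt
        rw [h] at h2
        exact lt_irrefl _ h2
    · -- distances
      intro z z'
      rcases Y.lt_total z z' with hlt | heq | hlt
      · exact hwdist _ _ hlt
      · subst heq
        show wdist n c v (w z) (w z) = Y.dist z z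
        rw [wdist_self, Y.dist_self]
      · show wdist n c v (w z) (w z') = Y.dist z z'
        rw [wdist_comm, Y.dist_comm, hwdist _ _ hlt]
    · -- order
      intro z z' h
      exact hwlt z z' h
    · -- the coloring
      intro g hg
      set gw : ℕ → ℕ := fun t => if h : t ≤ pX
        then ((invY (g (ptX ⟨t, by omega⟩)) : Fin (qY + 1)) : ℕ) else 0 with hgwdef
      have hgweq : ∀ t (ht : t ≤ pX),
          gw t = ((invY (g (ptX ⟨t, by omega⟩)) : Fin (qY + 1)) : ℕ) := by
        intro t ht
        show (if h : t ≤ pX then _ else 0) = _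
        rw [dif_pos ht]
      have hgwlt : ∀ t t', t < t' → t' ≤ pX → gw t < gw t' := by
        intro t t' h1 h2
        rw [hgweq t (by omega), hgweq t' h2]
        have := hg.2.2 _ _ (hltX ⟨t, by omega⟩ ⟨t', by omega⟩ (by simp [Fin.lt_def]; omega))
        exact hinvmonoY _ _ this
      have hgw : WEmb pX aX qY bY gw := by
        refine ⟨by rw [hgweq pX le_rfl]; omega, fun i hi => hgwlt i (i + 1) (by omega) (by omega),
          fun i hi => ?_⟩
        apply hvinj _ _ (gmax_lt_m hbY (hgwlt i (i + 1) (by omega) (by omega))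
          (by rw [hgweq (i + 1) (by omega)]; omega)) (haX _ hi)
        rw [← reprY _ _ (hgwlt i (i + 1) (by omega) (by omega))
          (by rw [hgweq (i + 1) (by omega)]; omega)]
        rw [hgweq i (by omega), hgweq (i + 1) (by omega)]
        rw [hptY'eq _ (by omega), hptY'eq _ (by omega)]
        have e3 : ∀ u : Y.U, ptY ⟨((invY u : Fin (qY + 1)) : ℕ), by omega⟩ = u := by
          intro u
          have : (⟨((invY u : Fin (qY + 1)) : ℕ), by omega⟩ : Fin (qY + 1)) = invY u :=
            Fin.ext rfl
          rw [this, hptinvY]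
        rw [e3, e3, hg.2.1]
        show X.dist _ _ = v (aX i)
        rw [haXdef]
        show X.dist _ _ = v (idx (X.dist (ptX' i) (ptX' (i + 1))))
        rw [hvidx _ (hmemX _ _ (hXconsne i hi))]
        rw [hptX'eq i (by omega), hptX'eq (i + 1) (by omega)]
      have hfin := hcol gw hgw
      have hfun : (fun x => toW ((fun i => ψ (gw i)) ((invX x : Fin (pX + 1)) : ℕ))) = w ∘ g := by
        funext x
        show toW (ψ (gw ((invX x : Fin (pX + 1)) : ℕ))) = w (g x)
        rw [hgweq _ (by omega)]
        have : ptX ⟨((invX x : Fin (pX + 1)) : ℕ), by omega⟩ = x := by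
          have h4 : (⟨((invX x : Fin (pX + 1)) : ℕ), by omega⟩ : Fin (pX + 1)) = invX x :=
            Fin.ext rfl
          rw [h4, hptinvX]
        rw [this]
      rw [hχwdef] at hfin
      show χ (w ∘ g) = col
      refine (congrArg χ hfun).symm.trans ?_
      exact hfin


end CRam

/-- The class of all finite convexly ordered ultrametric spaces has the Ramsey property. -/
theorem convexlyOrderedUltrametric_ramsey (k : ℕ) (hk : 2 ≤ k) (X Y : ConvOrdUltra)
    (hXY : ∃ f, ConvOrdUltra.Emb X Y f) :
    ∃ W : ConvOrdUltra,
      ∀ χ : (X.U → W.U) → Fin k,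
        ∃ w, ConvOrdUltra.Emb Y W w ∧ ∃ i : Fin k,
          ∀ g, ConvOrdUltra.Emb X Y g → χ (w ∘ g) = i := by
  exact CRam.final_ramsey k hk X Y hXY
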